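/- The tropical (max-plus) map on ℝ^2 given by T(Z,W) = (Z', W') where Z' = max(max(Z,0)+W, 0) − Z and W' = 2*max(W,0) + max(Z,0) − 2Z − W satisfies T^4 = id; that is, every orbit is periodic with period dividing 4. -/

import Mathlib

/-- The tropical (max-plus) version of the deformed D4 map. -/
def tropMap (p : ℝ × ℝ) : ℝ × ℝ :=
  (max (max p.1 0 + p.2) 0 - p.1,
    2 * max p.2 0 + max p.1 0 - 2 * p.1 - p.2)

private lemma l1 (a b : ℝ) (h1 : 0 ≤ a) (h2 : 0 ≤ b) : tropMap (a, b) = (b, b - a) := by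
  simp only [tropMap, max_eq_left h1, max_eq_left h2, max_eq_left (by linarith : (0:ℝ) ≤ a + b)]
  simp only [Prod.mk.injEq]; constructor <;> ring

private lemma l2 (a b : ℝ) (h2 : b ≤ 0) (hs : 0 ≤ a + b) : tropMap (a, b) = (b, -a - b) := by
  simp only [tropMap, max_eq_left (by linarith : (0:ℝ) ≤ a), max_eq_right h2, max_eq_left hs]
  simp only [Prod.mk.injEq]; constructor <;> ring

private lemma l3 (a b : ℝ) (h1 : 0 ≤ a) (hs : a + b ≤ 0) : tropMap (a, b) = (-a, -a - b) := by
  simp only [tropMap, max_eq_left h1, max_eq_right (by linarith : b ≤ (0:ℝ)), max_eq_right hs]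
  simp only [Prod.mk.injEq]; constructor <;> ring

private lemma l4 (a b : ℝ) (h1 : a ≤ 0) (h2 : b ≤ 0) : tropMap (a, b) = (-a, -(2 * a) - b) := by
  simp only [tropMap, max_eq_right h1, max_eq_right h2, zero_add, max_eq_right h2]
  simp only [Prod.mk.injEq]; constructor <;> ring

private lemma l5 (a b : ℝ) (h1 : a ≤ 0) (h2 : 0 ≤ b) : tropMap (a, b) = (b - a, b - 2 * a) := by
  simp only [tropMap, max_eq_right h1, max_eq_left h2, zero_add, max_eq_left h2]
  simp only [Prod.mk.injEq, true_and]; ring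

/-- Every orbit of the tropical map is periodic with period dividing 4: T⁴ = id. -/
theorem tropMap_periodic_four (p : ℝ × ℝ) : tropMap^[4] p = p := by
  obtain ⟨x, y⟩ := p
  show tropMap (tropMap (tropMap (tropMap (x, y)))) = (x, y)
  rcases le_total 0 x with hx | hx <;> rcases le_total 0 y with hy | hy
  · -- quadrant
    rw [l1 x y (by linarith) (by linarith)]
    rcases le_total 0 (-1 * x + 1 * y) with h1 | h1
    · -- 0 ≤ e
      rw [l1 y (y - x) (by linarith) (by linarith)]
      rcases le_total 0 (-2 * x + 1 * y) with h2 | h2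
      · -- 0 ≤ e
        rw [l2 ((y - x)) ((y - x) - y) (by linarith) (by linarith)]
        rw [l4 (((y - x) - y)) (-((y - x)) - ((y - x) - y)) (by linarith) (by linarith)]
        simp only [Prod.mk.injEq]
        exact ⟨by linarith, by linarith⟩
      · -- e ≤ 0
        rw [l3 ((y - x)) ((y - x) - y) (by linarith) (by linarith)]
        rw [l5 (-((y - x))) (-((y - x)) - ((y - x) - y)) (by linarith) (by linarith)]
        simp only [Prod.mk.injEq]
        exact ⟨by linarith, by linarith⟩
    · -- e ≤ 0
      rcases le_total 0 (-1 * x + 2 * y) with h3 | h3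
      · -- 0 ≤ e
        rw [l2 y (y - x) (by linarith) (by linarith)]
        rw [l4 ((y - x)) (-y - (y - x)) (by linarith) (by linarith)]
        rw [l1 (-((y - x))) (-(2 * ((y - x))) - (-y - (y - x))) (by linarith) (by linarith)]
        simp only [Prod.mk.injEq]
        exact ⟨by linarith, by linarith⟩
      · -- e ≤ 0
        rw [l3 y (y - x) (by linarith) (by linarith)]
        rw [l5 (-y) (-y - (y - x)) (by linarith) (by linarith)]
        rw [l1 ((-y - (y - x)) - (-y)) ((-y - (y - x)) - 2 * (-y)) (by linarith) (by linarith)]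
        simp only [Prod.mk.injEq]
        exact ⟨by linarith, by linarith⟩
  · -- quadrant
    rcases le_total 0 (1 * x + 1 * y) with h4 | h4
    · -- 0 ≤ e
      rw [l2 x y (by linarith) (by linarith)]
      rw [l4 y (-x - y) (by linarith) (by linarith)]
      rw [l1 (-y) (-(2 * y) - (-x - y)) (by linarith) (by linarith)]
      rw [l1 ((-(2 * y) - (-x - y))) ((-(2 * y) - (-x - y)) - (-y)) (by linarith) (by linarith)]
      simp only [Prod.mk.injEq]
      exact ⟨by linarith, by linarith⟩
    · -- e ≤ 0
      rw [l3 x y (by linarith) (by linarith)]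
      rw [l5 (-x) (-x - y) (by linarith) (by linarith)]
      rw [l1 ((-x - y) - (-x)) ((-x - y) - 2 * (-x)) (by linarith) (by linarith)]
      rw [l1 (((-x - y) - 2 * (-x))) (((-x - y) - 2 * (-x)) - ((-x - y) - (-x))) (by linarith) (by linarith)]
      simp only [Prod.mk.injEq]
      exact ⟨by linarith, by linarith⟩
  · -- quadrant
    rw [l5 x y (by linarith) (by linarith)]
    rw [l1 (y - x) (y - 2 * x) (by linarith) (by linarith)]
    rw [l1 ((y - 2 * x)) ((y - 2 * x) - (y - x)) (by linarith) (by linarith)]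
    rw [l3 (((y - 2 * x) - (y - x))) (((y - 2 * x) - (y - x)) - ((y - 2 * x))) (by linarith) (by linarith)]
    simp only [Prod.mk.injEq]
    exact ⟨by linarith, by linarith⟩
  · -- quadrant
    rw [l4 x y (by linarith) (by linarith)]
    rw [l1 (-x) (-(2 * x) - y) (by linarith) (by linarith)]
    rw [l1 ((-(2 * x) - y)) ((-(2 * x) - y) - (-x)) (by linarith) (by linarith)]
    rw [l2 (((-(2 * x) - y) - (-x))) (((-(2 * x) - y) - (-x)) - ((-(2 * x) - y))) (by linarith) (by linarith)]
    simp only [Prod.mk.injEq]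
    exact ⟨by linarith, by linarith⟩
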